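/- Let n ≥ 1 and let D ⊆ [1, ∞) be such that |a − b| ≥ 1 for all distinct a, b ∈ D. With g : Dⁿ → ℝ defined by g(d₁, …, dₙ) = m + Σ_{i=1}^{n} dᵢ/(n m)^i where m = max{d₁, …, dₙ}, the image g(Dⁿ) is discrete and closed in ℝ. -/

import Mathlib

def DiscreteSet (D : Set ℝ) : Prop :=
  ∀ d ∈ D, ∃ ε > 0, ∀ x ∈ D, |x - d| < ε → x = d

/-- A set of reals pairwise separated by 1 and bounded below has finite
intersection with any interval `Icc 1 N`. -/
lemma sep_finite_aux (D : Set ℝ)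
    (hsep : ∀ a ∈ D, ∀ b ∈ D, a ≠ b → 1 ≤ |a - b|) (N : ℝ) :
    (D ∩ Set.Icc 1 N).Finite := by
  apply Set.Finite.of_finite_image (f := fun x => (⌊x⌋ : ℤ))
  · apply Set.Finite.subset (Set.finite_Icc (1 : ℤ) ⌊N⌋)
    rintro z ⟨x, ⟨hxD, hx1, hxN⟩, rfl⟩
    exact ⟨Int.le_floor.mpr (by exact_mod_cast hx1), Int.floor_le_floor hxN⟩
  · rintro a ⟨haD, -⟩ b ⟨hbD, -⟩ hab
    by_contra hne
    have h1 := hsep a haD b hbD hne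
    have ha := Int.fract_nonneg a
    have ha' := Int.fract_lt_one a
    have hb := Int.fract_nonneg b
    have hb' := Int.fract_lt_one b
    have : a - b = Int.fract a - Int.fract b := by
      have hfa := Int.floor_add_fract a
      have hfb := Int.floor_add_fract b
      have : (⌊a⌋ : ℝ) = (⌊b⌋ : ℝ) := by exact_mod_cast hab
      linarith
    rw [this] at h1
    have hlt : |Int.fract a - Int.fract b| < 1 :=
      abs_sub_lt_iff.mpr ⟨by linarith, by linarith⟩
    linarith

theorem stmt_8 (n : ℕ) [NeZero n] (D : Set ℝ) (hD : D ⊆ Set.Ici 1)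
    (hsep : ∀ a ∈ D, ∀ b ∈ D, a ≠ b → 1 ≤ |a - b|)
    (g : (Fin n → ℝ) → ℝ)
    (hg : ∀ d : Fin n → ℝ, g d = (⨆ i, d i) +
      ∑ i : Fin n, d i / ((n : ℝ) * ⨆ j, d j) ^ (i.val + 1)) :
    DiscreteSet {y : ℝ | ∃ d : Fin n → ℝ, (∀ i, d i ∈ D) ∧ y = g d} ∧
    IsClosed {y : ℝ | ∃ d : Fin n → ℝ, (∀ i, d i ∈ D) ∧ y = g d} := by
  set S := {y : ℝ | ∃ d : Fin n → ℝ, (∀ i, d i ∈ D) ∧ y = g d} with hS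
  have hn : 0 < n := Nat.pos_of_ne_zero (NeZero.ne n)
  -- each element of S is ≥ its max, and the d i are ≤ g d
  have hle : ∀ d : Fin n → ℝ, (∀ i, d i ∈ D) → ∀ i, d i ≤ g d := by
    intro d hd i
    have hbdd : BddAbove (Set.range d) := (Set.finite_range d).bddAbove
    have hsup : ∀ j, d j ≤ ⨆ k, d k := fun j => le_ciSup hbdd j
    have hm1 : (1 : ℝ) ≤ ⨆ k, d k :=
      le_trans (hD (hd ⟨0, hn⟩)) (hsup ⟨0, hn⟩)
    have hsum : (0 : ℝ) ≤ ∑ j : Fin n, d j / ((n : ℝ) * ⨆ k, d k) ^ (j.val + 1) := by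
      apply Finset.sum_nonneg
      intro j _
      apply div_nonneg
      · exact le_trans zero_le_one (hD (hd j))
      · positivity
    have := hg d
    have := hsup i
    linarith
  -- the key finiteness fact
  have hfin : ∀ N : ℝ, (S ∩ Set.Iic N).Finite := by
    intro N
    have hT : (Set.pi Set.univ (fun _ : Fin n => D ∩ Set.Icc 1 N)).Finite :=
      Set.Finite.pi (fun _ => sep_finite_aux D hsep N)
    apply Set.Finite.subset (hT.image g)
    rintro y ⟨⟨d, hd, rfl⟩, hyN⟩
    refine ⟨d, ?_, rfl⟩
    intro i _
    exact ⟨hd i, hD (hd i), le_trans (hle d hd i) hyN⟩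
  constructor
  · -- discrete
    intro d hdS
    have hF : ((S ∩ Set.Iic (d + 1)) \ {d}).Finite := ((hfin (d + 1)).diff)
    have hFc : IsClosed ((S ∩ Set.Iic (d + 1)) \ {d}) := hF.isClosed
    have hdn : d ∈ ((S ∩ Set.Iic (d + 1)) \ {d})ᶜ := by simp
    obtain ⟨ε, hε, hball⟩ := Metric.isOpen_iff.mp hFc.isOpen_compl d hdn
    refine ⟨min ε 1, lt_min hε one_pos, ?_⟩
    intro x hx hxd
    by_contra hne
    have h1 : |x - d| < 1 := lt_of_lt_of_le hxd (min_le_right _ _)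
    have hxF : x ∈ (S ∩ Set.Iic (d + 1)) \ {d} := by
      refine ⟨⟨hx, ?_⟩, hne⟩
      have := abs_le.mp h1.le
      simp only [Set.mem_Iic]; linarith [this.2]
    have : x ∈ Metric.ball d ε := by
      rw [Metric.mem_ball, Real.dist_eq]
      exact lt_of_lt_of_le hxd (min_le_left _ _)
    exact hball this hxF
  · -- closed
    rw [← isOpen_compl_iff, Metric.isOpen_iff]
    intro y hy
    have hF : (S ∩ Set.Iic (y + 1)).Finite := hfin (y + 1)
    have hFc : IsClosed (S ∩ Set.Iic (y + 1)) := hF.isClosed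
    have hyn : y ∈ (S ∩ Set.Iic (y + 1))ᶜ := fun h => hy h.1
    obtain ⟨ε, hε, hball⟩ := Metric.isOpen_iff.mp hFc.isOpen_compl y hyn
    refine ⟨min ε 1, lt_min hε one_pos, ?_⟩
    intro x hx hxS
    have hd : |x - y| < min ε 1 := by rwa [Metric.mem_ball, Real.dist_eq] at hx
    have h1 : |x - y| < 1 := lt_of_lt_of_le hd (min_le_right _ _)
    have hxF : x ∈ S ∩ Set.Iic (y + 1) := by
      refine ⟨hxS, ?_⟩
      have := abs_le.mp h1.le
      simp only [Set.mem_Iic]; linarith [this.2]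
    have : x ∈ Metric.ball y ε := by
      rw [Metric.mem_ball, Real.dist_eq]
      exact lt_of_lt_of_le hd (min_le_left _ _)
    exact hball this hxF
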